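/- Let J ∈ M_N(ℂ) be an invertible Hermitian matrix and let A ∈ M_N(ℂ) be diagonalizable and pseudo-unitary with respect to J, i.e. A†·J·A = J. Then the spectral radius of the linear endomorphism Ad_A : X ↦ A·X·A⁻¹ of M_N(ℂ) equals the square of the spectral radius of A: max{|μ| : μ ∈ σ(Ad_A)} = (max{|λ| : λ ∈ σ(A)})². -/

import Mathlib

open Matrix

/-- Conjugation `Ad_A : X ↦ A·X·A⁻¹` as a linear endomorphism of `M_N(ℂ)`. -/
noncomputable def Ad (N : ℕ) (A : Matrix (Fin N) (Fin N) ℂ) :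
    Module.End ℂ (Matrix (Fin N) (Fin N) ℂ) where
  toFun X := A * X * A⁻¹
  map_add' X Y := by simp [Matrix.mul_add, Matrix.add_mul]
  map_smul' c X := by simp [Matrix.mul_smul, Matrix.smul_mul]

lemma Ad_apply (N : ℕ) (A X : Matrix (Fin N) (Fin N) ℂ) :
    Ad N A X = A * X * A⁻¹ := rfl

lemma Ad_mul (N : ℕ) (A B : Matrix (Fin N) (Fin N) ℂ) :
    Ad N (A * B) = Ad N A * Ad N B := by
  ext X : 1
  simp only [Module.End.mul_apply, Ad_apply, Matrix.mul_inv_rev]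
  noncomm_ring

/-- A unit of the matrix ring from an invertible matrix. -/
noncomputable def matUnit {N : ℕ} (P : Matrix (Fin N) (Fin N) ℂ) (hP : IsUnit P.det) :
    (Matrix (Fin N) (Fin N) ℂ)ˣ where
  val := P
  inv := P⁻¹
  val_inv := Matrix.mul_nonsing_inv P hP
  inv_val := Matrix.nonsing_inv_mul P hP

/-- A unit of the endomorphism ring from Ad of an invertible matrix. -/
noncomputable def adUnit {N : ℕ} (P : Matrix (Fin N) (Fin N) ℂ) (hP : IsUnit P.det) :
    (Module.End ℂ (Matrix (Fin N) (Fin N) ℂ))ˣ where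
  val := Ad N P
  inv := Ad N P⁻¹
  val_inv := by
    ext X : 1
    simp only [Module.End.mul_apply, Ad_apply, Module.End.one_apply,
      Matrix.nonsing_inv_nonsing_inv P hP]
    rw [show P * (P⁻¹ * X * P) * P⁻¹ = (P * P⁻¹) * X * (P * P⁻¹) by noncomm_ring,
      Matrix.mul_nonsing_inv P hP]
    simp
  inv_val := by
    ext X : 1
    simp only [Module.End.mul_apply, Ad_apply, Module.End.one_apply,
      Matrix.nonsing_inv_nonsing_inv P hP]
    rw [show P⁻¹ * (P * X * P⁻¹) * P = (P⁻¹ * P) * X * (P⁻¹ * P) by noncomm_ring,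
      Matrix.nonsing_inv_mul P hP]
    simp

lemma spectrum_Ad_diagonal {N : ℕ} (d : Fin N → ℂ) (hd : ∀ i, d i ≠ 0) :
    spectrum ℂ (Ad N (Matrix.diagonal d)) =
      Set.range (fun p : Fin N × Fin N => d p.1 * (d p.2)⁻¹) := by
  have hinv : (Matrix.diagonal d)⁻¹ = Matrix.diagonal (fun i => (d i)⁻¹) := by
    refine Matrix.inv_eq_left_inv ?_
    rw [Matrix.diagonal_mul_diagonal]
    convert Matrix.diagonal_one using 2
    ext i
    exact inv_mul_cancel₀ (hd i)
  ext μ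
  rw [← Module.End.hasEigenvalue_iff_mem_spectrum]
  constructor
  · intro h
    obtain ⟨X, hX⟩ := h.exists_hasEigenvector
    have hXeq : Matrix.diagonal d * X * (Matrix.diagonal d)⁻¹ = μ • X := hX.apply_eq_smul
    have hXne := hX.right
    have : ∃ i j, X i j ≠ 0 := by
      by_contra hc
      push_neg at hc
      exact hXne (by ext i j; simp [hc])
    obtain ⟨i, j, hij⟩ := this
    have hentry : d i * X i j * (d j)⁻¹ = μ * X i j := by
      have := congrFun (congrFun hXeq i) j
      simpa [hinv, Matrix.diagonal_mul, Matrix.mul_diagonal] using this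
    refine ⟨(i, j), ?_⟩
    have h2 : (d i * (d j)⁻¹) * X i j = μ * X i j := by rw [← hentry]; ring
    exact mul_right_cancel₀ hij h2
  · rintro ⟨⟨i, j⟩, rfl⟩
    have hE : Ad N (Matrix.diagonal d) (Matrix.single i j 1)
        = (d i * (d j)⁻¹) • Matrix.single i j 1 := by
      ext a b
      simp only [Ad_apply, hinv, Matrix.diagonal_mul, Matrix.mul_diagonal,
        Matrix.smul_apply, Matrix.single, Matrix.of_apply, smul_eq_mul]
      by_cases ha : i = a <;> by_cases hb : j = b <;> simp [ha, hb] <;> ring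
    exact Module.End.hasEigenvalue_of_hasEigenvector
      ⟨Module.End.mem_eigenspace_iff.2 hE, by
        intro hc
        have := congrFun (congrFun hc i) j
        simp [Matrix.single] at this⟩

lemma diag_inv {N : ℕ} (d : Fin N → ℂ) (hd : ∀ i, d i ≠ 0) :
    (Matrix.diagonal d)⁻¹ = Matrix.diagonal (fun i => (d i)⁻¹) := by
  refine Matrix.inv_eq_left_inv ?_
  rw [Matrix.diagonal_mul_diagonal]
  convert Matrix.diagonal_one using 2
  ext i
  exact inv_mul_cancel₀ (hd i)


/-- If `J ∈ M_N(ℂ)` is an invertible Hermitian matrix and `A` is diagonalizable and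
pseudo-unitary with respect to `J` (`A†JA = J`), then the spectral radius of
`Ad_A : X ↦ AXA⁻¹` equals the square of the spectral radius of `A`. -/
theorem statement15 (N : ℕ) (J A : Matrix (Fin N) (Fin N) ℂ)
    (hJh : J.IsHermitian) (hJu : IsUnit J.det)
    (hdiag : ∃ (P : Matrix (Fin N) (Fin N) ℂ) (d : Fin N → ℂ),
      IsUnit P.det ∧ A = P * Matrix.diagonal d * P⁻¹)
    (hA : Aᴴ * J * A = J) :
    spectralRadius ℂ (Ad N A) = (spectralRadius ℂ A) ^ 2 := by
  obtain ⟨P, d, hP, hAeq⟩ := hdiag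
  -- A is invertible
  have hJne : J.det ≠ 0 := hJu.ne_zero
  have hdetprod : Aᴴ.det * J.det * A.det = J.det := by
    rw [← Matrix.det_mul, ← Matrix.det_mul, hA]
  have hstar : (starRingEnd ℂ) A.det * A.det = 1 := by
    have h1 : ((starRingEnd ℂ) A.det * A.det) * J.det = 1 * J.det := by
      rw [one_mul]
      have hct : Aᴴ.det = (starRingEnd ℂ) A.det := Matrix.det_conjTranspose A
      linear_combination hdetprod - J.det * A.det * hct + A.det * J.det * hct - hct * J.det * A.det
    have := mul_right_cancel₀ hJne h1
    simpa using this
  have hdetA : IsUnit A.det := IsUnit.of_mul_eq_one _ (by rw [mul_comm]; exact hstar)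
  -- the diagonal entries are nonzero
  have hd : ∀ i, d i ≠ 0 := by
    intro i hi
    apply hdetA.ne_zero
    rw [hAeq]
    have : (Matrix.diagonal d).det = 0 := by
      rw [Matrix.det_diagonal]
      exact Finset.prod_eq_zero (Finset.mem_univ i) hi
    simp [Matrix.det_mul, this]
  -- spectrum of A
  have hspecA : spectrum ℂ A = Set.range d := by
    rw [hAeq,
      show P * Matrix.diagonal d * P⁻¹
        = ↑(matUnit P hP) * Matrix.diagonal d * ↑(matUnit P hP)⁻¹ from rfl,
      spectrum.units_conjugate, spectrum_diagonal]
  -- spectrum of A⁻¹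
  have hAinv : A⁻¹ = P * Matrix.diagonal (fun i => (d i)⁻¹) * P⁻¹ := by
    rw [hAeq, Matrix.mul_inv_rev, Matrix.mul_inv_rev,
      Matrix.nonsing_inv_nonsing_inv P hP, diag_inv d hd, Matrix.mul_assoc]
  have hspecAinv : spectrum ℂ A⁻¹ = Set.range (fun i => (d i)⁻¹) := by
    rw [hAinv,
      show P * Matrix.diagonal (fun i => (d i)⁻¹) * P⁻¹
        = ↑(matUnit P hP) * Matrix.diagonal (fun i => (d i)⁻¹) * ↑(matUnit P hP)⁻¹ from rfl,
      spectrum.units_conjugate, spectrum_diagonal]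
  -- spectrum of Aᴴ
  have hPH : IsUnit (Pᴴ).det := by
    rw [Matrix.det_conjTranspose]
    exact hP.star
  have hAH2 : Aᴴ = (Pᴴ)⁻¹ * Matrix.diagonal (fun i => (starRingEnd ℂ) (d i)) * Pᴴ := by
    rw [hAeq, Matrix.conjTranspose_mul, Matrix.conjTranspose_mul,
      Matrix.conjTranspose_nonsing_inv, Matrix.diagonal_conjTranspose, Matrix.mul_assoc]
    rfl
  have hspecAH : spectrum ℂ Aᴴ = Set.range (fun i => (starRingEnd ℂ) (d i)) := by
    rw [hAH2,
      show (Pᴴ)⁻¹ * Matrix.diagonal (fun i => (starRingEnd ℂ) (d i)) * Pᴴ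
        = ↑(matUnit Pᴴ hPH)⁻¹ * Matrix.diagonal (fun i => (starRingEnd ℂ) (d i))
          * ↑(matUnit Pᴴ hPH) from rfl,
      spectrum.units_conjugate', spectrum_diagonal]
  -- pseudo-unitarity: Aᴴ = J * A⁻¹ * J⁻¹
  have hconj : Aᴴ = J * A⁻¹ * J⁻¹ := by
    have h1 : Aᴴ * J = J * A⁻¹ := by
      calc Aᴴ * J = Aᴴ * J * (A * A⁻¹) := by
            rw [Matrix.mul_nonsing_inv A hdetA, Matrix.mul_one]
        _ = (Aᴴ * J * A) * A⁻¹ := by noncomm_ring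
        _ = J * A⁻¹ := by rw [hA]
    calc Aᴴ = Aᴴ * (J * J⁻¹) := by rw [Matrix.mul_nonsing_inv J hJu, Matrix.mul_one]
      _ = (Aᴴ * J) * J⁻¹ := by noncomm_ring
      _ = J * A⁻¹ * J⁻¹ := by rw [h1]
  have hspecEq : spectrum ℂ Aᴴ = spectrum ℂ A⁻¹ := by
    rw [hconj,
      show J * A⁻¹ * J⁻¹ = ↑(matUnit J hJu) * A⁻¹ * ↑(matUnit J hJu)⁻¹ from rfl,
      spectrum.units_conjugate]
  have hr : Set.range (fun i => (d i)⁻¹) = Set.range (fun i => (starRingEnd ℂ) (d i)) := by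
    rw [← hspecAinv, ← hspecEq, hspecAH]
  -- spectrum of Ad A
  have hAdA : Ad N A = ↑(adUnit P hP) * Ad N (Matrix.diagonal d) * ↑(adUnit P hP)⁻¹ := by
    rw [hAeq, Ad_mul, Ad_mul]
    rfl
  have hspecAd : spectrum ℂ (Ad N A)
      = Set.range (fun p : Fin N × Fin N => d p.1 * (d p.2)⁻¹) := by
    rw [hAdA, spectrum.units_conjugate, spectrum_Ad_diagonal d hd]
  -- spectral radii
  have hrA : spectralRadius ℂ A = ⨆ i, (‖d i‖₊ : ENNReal) := by
    rw [spectralRadius, hspecA, iSup_range]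
  have hrAd : spectralRadius ℂ (Ad N A)
      = ⨆ p : Fin N × Fin N, (‖d p.1 * (d p.2)⁻¹‖₊ : ENNReal) := by
    rw [spectralRadius, hspecAd, iSup_range]
  have hsym : (⨆ j, (‖(d j)⁻¹‖₊ : ENNReal)) = ⨆ j, (‖d j‖₊ : ENNReal) := by
    apply le_antisymm
    · refine iSup_le fun j => ?_
      have : (d j)⁻¹ ∈ Set.range (fun i => (starRingEnd ℂ) (d i)) := by
        rw [← hr]; exact Set.mem_range_self j
      obtain ⟨k, hk⟩ := this
      rw [← hk]
      simp only [RCLike.nnnorm_conj]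
      exact le_iSup (fun i => (‖d i‖₊ : ENNReal)) k
    · refine iSup_le fun j => ?_
      have : (starRingEnd ℂ) (d j) ∈ Set.range (fun i => (d i)⁻¹) := by
        rw [hr]; exact Set.mem_range_self j
      obtain ⟨k, hk⟩ := this
      have hk' : (d k)⁻¹ = (starRingEnd ℂ) (d j) := hk
      have : (‖d j‖₊ : ENNReal) = ‖(d k)⁻¹‖₊ := by rw [hk']; simp
      rw [this]
      exact le_iSup (fun i => (‖(d i)⁻¹‖₊ : ENNReal)) k
  rw [hrAd, hrA, sq]
  calc (⨆ p : Fin N × Fin N, (‖d p.1 * (d p.2)⁻¹‖₊ : ENNReal))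
      = ⨆ i, ⨆ j, ((‖d i‖₊ : ENNReal) * (‖(d j)⁻¹‖₊ : ENNReal)) := by
        rw [iSup_prod]; simp_rw [nnnorm_mul, ENNReal.coe_mul]
    _ = (⨆ i, (‖d i‖₊ : ENNReal)) * ⨆ j, (‖(d j)⁻¹‖₊ : ENNReal) := by
        rw [ENNReal.iSup_mul]
        exact iSup_congr fun i => (ENNReal.mul_iSup _ _).symm
    _ = (⨆ i, (‖d i‖₊ : ENNReal)) * ⨆ j, (‖d j‖₊ : ENNReal) := by rw [hsym]
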